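/- Let n ≥ 2, let t > 0, and let u_1,…,u_n, v_1,…,v_n be vectors in ℝ^d with ‖u_i‖ = ‖v_i‖ = 1 for all i. Then the symmetric InfoNCE loss satisfies (1/(2n)) ∑_{i=1}^n log(1 + ∑_{j≠i} exp((⟨u_i, v_j⟩ − ⟨u_i, v_i⟩)/t)) + (1/(2n)) ∑_{i=1}^n log(1 + ∑_{j≠i} exp((⟨u_j, v_i⟩ − ⟨u_i, v_i⟩)/t)) ≥ log(1 + (n−1)·exp(−n/((n−1)·t))). -/

import Mathlib

open scoped RealInnerProductSpace
open Finset

lemma aux_convex {c : ℝ} (hc : 0 ≤ c) :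
    ConvexOn ℝ Set.univ (fun s => Real.log (1 + c * Real.exp s)) := by
  have hpos : ∀ s : ℝ, 0 < 1 + c * Real.exp s := fun s => by positivity
  have hd : ∀ s : ℝ, HasDerivAt (fun s => Real.log (1 + c * Real.exp s))
      (c * Real.exp s / (1 + c * Real.exp s)) s := by
    intro s
    have h1 : HasDerivAt (fun s : ℝ => 1 + c * Real.exp s) (c * Real.exp s) s := by
      simpa using ((Real.hasDerivAt_exp s).const_mul c).const_add 1
    simpa using h1.log (hpos s).ne'
  have hdiff : Differentiable ℝ (fun s => Real.log (1 + c * Real.exp s)) :=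
    fun s => (hd s).differentiableAt
  have hderiv : deriv (fun s => Real.log (1 + c * Real.exp s)) =
      fun s => c * Real.exp s / (1 + c * Real.exp s) := funext fun s => (hd s).deriv
  apply Monotone.convexOn_univ_of_deriv hdiff
  rw [hderiv]
  intro a b hab
  rw [div_le_div_iff₀ (hpos a) (hpos b)]
  have h := Real.exp_le_exp.2 hab
  nlinarith [Real.exp_pos a, Real.exp_pos b, mul_le_mul_of_nonneg_left h hc]

lemma aux_mono {c : ℝ} (hc : 0 ≤ c) {x y : ℝ} (h : x ≤ y) :
    Real.log (1 + c * Real.exp x) ≤ Real.log (1 + c * Real.exp y) := by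
  apply Real.log_le_log (by positivity)
  have := Real.exp_le_exp.2 h
  nlinarith

lemma exp_avg_le {ι : Type*} (s : Finset ι) (hs : s.Nonempty) (x : ι → ℝ) :
    (s.card : ℝ) * Real.exp ((∑ j ∈ s, x j) / s.card) ≤ ∑ j ∈ s, Real.exp (x j) := by
  have hcard : (0:ℝ) < s.card := by exact_mod_cast Finset.card_pos.2 hs
  have h := convexOn_exp.map_sum_le (t := s) (w := fun _ => (s.card:ℝ)⁻¹) (p := x)
    (fun i _ => by positivity) (by simp [Finset.sum_const]; field_simp) (fun i _ => Set.mem_univ _)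
  simp only [smul_eq_mul] at h
  have e1 : ∑ j ∈ s, (s.card:ℝ)⁻¹ * x j = (∑ j ∈ s, x j) / s.card := by
    rw [← Finset.mul_sum]; ring
  rw [e1] at h
  have e2 : ∑ j ∈ s, (s.card:ℝ)⁻¹ * Real.exp (x j) = (∑ j ∈ s, Real.exp (x j)) / s.card := by
    rw [← Finset.mul_sum]; ring
  rw [e2] at h
  calc (s.card : ℝ) * Real.exp ((∑ j ∈ s, x j) / s.card)
      ≤ (s.card : ℝ) * ((∑ j ∈ s, Real.exp (x j)) / s.card) :=
        mul_le_mul_of_nonneg_left h hcard.le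
    _ = ∑ j ∈ s, Real.exp (x j) := by field_simp

lemma key_inner {d n : ℕ} (u v : Fin n → EuclideanSpace ℝ (Fin d))
    (hu : ∀ i, ‖u i‖ = 1) (hv : ∀ i, ‖v i‖ = 1) :
    -(n:ℝ)^2 ≤ ⟪∑ i, u i, ∑ i, v i⟫ - n * ∑ i, ⟪u i, v i⟫ := by
  set U := ∑ i, u i
  set V := ∑ i, v i
  set E := ∑ i, ‖u i - v i‖^2 with hE
  have hEnn : 0 ≤ E := Finset.sum_nonneg fun i _ => by positivity
  have h1 : ∑ i, ⟪u i, v i⟫ = n - E / 2 := by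
    have : ∀ i, ⟪u i, v i⟫ = 1 - ‖u i - v i‖^2 / 2 := by
      intro i
      have := @norm_sub_sq_real (EuclideanSpace ℝ (Fin d)) _ _ (u i) (v i)
      rw [hu i, hv i] at this
      linarith
    simp only [this, Finset.sum_sub_distrib, Finset.sum_const, Finset.card_univ,
      Fintype.card_fin, nsmul_eq_mul, mul_one, hE, ← Finset.sum_div]
  have h2 : ⟪U, V⟫ = (‖U‖^2 + ‖V‖^2 - ‖U - V‖^2) / 2 := by
    have := @norm_sub_sq_real (EuclideanSpace ℝ (Fin d)) _ _ U V
    linarith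
  have h3 : ‖U - V‖^2 ≤ n * E := by
    have hUV : U - V = ∑ i, (u i - v i) := by
      rw [Finset.sum_sub_distrib]
    have hnorm : ‖U - V‖ ≤ ∑ i, ‖u i - v i‖ := by
      rw [hUV]; exact norm_sum_le _ _
    have hsq : ‖U - V‖^2 ≤ (∑ i, ‖u i - v i‖)^2 := by
      have := norm_nonneg (U - V)
      nlinarith
    refine hsq.trans ?_
    have := sq_sum_le_card_mul_sum_sq (s := (univ : Finset (Fin n)))
      (f := fun i => ‖u i - v i‖)
    simpa [Finset.card_univ] using this
  have hU : 0 ≤ ‖U‖^2 := by positivity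
  have hV : 0 ≤ ‖V‖^2 := by positivity
  nlinarith

theorem stmt_11 {d n : ℕ} (hn : 2 ≤ n) (t : ℝ) (ht : 0 < t)
    (u v : Fin n → EuclideanSpace ℝ (Fin d))
    (hu : ∀ i, ‖u i‖ = 1) (hv : ∀ i, ‖v i‖ = 1) :
    Real.log (1 + ((n : ℝ) - 1) * Real.exp (-(n : ℝ) / (((n : ℝ) - 1) * t)))
      ≤ (1 / (2 * (n : ℝ))) *
          ∑ i, Real.log (1 + ∑ j ∈ univ.erase i,
            Real.exp ((⟪u i, v j⟫ - ⟪u i, v i⟫) / t))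
        + (1 / (2 * (n : ℝ))) *
          ∑ i, Real.log (1 + ∑ j ∈ univ.erase i,
            Real.exp ((⟪u j, v i⟫ - ⟪u i, v i⟫) / t)) := by
  have hn2 : (2:ℝ) ≤ (n:ℝ) := by exact_mod_cast hn
  have hc : (0:ℝ) < (n:ℝ) - 1 := by linarith
  have hNpos : (0:ℝ) < (n:ℝ) := by linarith
  set N : ℝ := (n:ℝ) with hN
  set g : ℝ → ℝ := fun s => Real.log (1 + (N - 1) * Real.exp s) with hg
  set p : Fin n → ℝ :=
    fun i => (∑ j ∈ univ.erase i, (⟪u i, v j⟫ - ⟪u i, v i⟫)) / ((N-1)*t) with hp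
  set q : Fin n → ℝ :=
    fun i => (∑ j ∈ univ.erase i, (⟪u j, v i⟫ - ⟪u i, v i⟫)) / ((N-1)*t) with hq
  have hcard : ∀ i : Fin n, (((univ : Finset (Fin n)).erase i).card : ℝ) = N - 1 := by
    intro i
    rw [Finset.card_erase_of_mem (mem_univ i), card_univ, Fintype.card_fin]
    have h1 : 1 ≤ n := by omega
    push_cast [Nat.cast_sub h1]
    ring
  have hne : ∀ i : Fin n, ((univ : Finset (Fin n)).erase i).Nonempty := by
    intro i
    rw [← Finset.card_pos]
    have : (0:ℝ) < (((univ : Finset (Fin n)).erase i).card : ℝ) := by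
      rw [hcard i]; linarith
    exact_mod_cast this
  -- Step 1: per-index lower bound via AM-GM on exp
  have step1 : ∀ (i : Fin n) (a : Fin n → ℝ),
      (((univ : Finset (Fin n)).erase i).Nonempty) →
      g ((∑ j ∈ univ.erase i, a j) / ((N-1)*t)) ≤
        Real.log (1 + ∑ j ∈ univ.erase i, Real.exp (a j / t)) := by
    intro i a hne'
    have h := exp_avg_le (univ.erase i) hne' (fun j => a j / t)
    rw [hcard i] at h
    have harg : (∑ j ∈ univ.erase i, a j / t) / (N - 1)
        = (∑ j ∈ univ.erase i, a j) / ((N-1)*t) := by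
      rw [← Finset.sum_div, div_div, mul_comm t (N-1)]
    rw [harg] at h
    apply Real.log_le_log (by positivity)
    linarith
  have hstep1 : ∀ i : Fin n, g (p i) ≤
      Real.log (1 + ∑ j ∈ univ.erase i, Real.exp ((⟪u i, v j⟫ - ⟪u i, v i⟫) / t)) :=
    fun i => step1 i (fun j => ⟪u i, v j⟫ - ⟪u i, v i⟫) (hne i)
  have hstep2 : ∀ i : Fin n, g (q i) ≤
      Real.log (1 + ∑ j ∈ univ.erase i, Real.exp ((⟪u j, v i⟫ - ⟪u i, v i⟫) / t)) :=
    fun i => step1 i (fun j => ⟪u j, v i⟫ - ⟪u i, v i⟫) (hne i)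
  -- Step 2: Jensen over i for g
  have hgconv := aux_convex (c := N - 1) hc.le
  have jensen : ∀ r : Fin n → ℝ,
      g ((∑ i, r i) / N) ≤ (∑ i, g (r i)) / N := by
    intro r
    have h := hgconv.map_sum_le (t := (univ : Finset (Fin n)))
      (w := fun _ => (N)⁻¹) (p := r)
      (fun i _ => by positivity)
      (by simp [Finset.sum_const, Finset.card_univ]; field_simp; exact hN.symm)
      (fun i _ => Set.mem_univ _)
    simp only [smul_eq_mul] at h
    rw [← Finset.mul_sum, ← Finset.mul_sum] at h
    calc g ((∑ i, r i) / N) = g (N⁻¹ * ∑ i, r i) := by rw [inv_mul_eq_div]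
      _ ≤ N⁻¹ * ∑ i, g (r i) := h
      _ = (∑ i, g (r i)) / N := by rw [inv_mul_eq_div]
  -- Step 3: the sum of the exponents
  have hS := key_inner u v hu hv
  set S : ℝ := ⟪∑ i, u i, ∑ i, v i⟫ - N * ∑ i, ⟪u i, v i⟫ with hSdef
  have hsumA : ∑ i, (∑ j ∈ univ.erase i, (⟪u i, v j⟫ - ⟪u i, v i⟫)) = S := by
    have : ∀ i : Fin n, ∑ j ∈ univ.erase i, (⟪u i, v j⟫ - ⟪u i, v i⟫)
        = ⟪u i, ∑ j, v j⟫ - N * ⟪u i, v i⟫ := by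
      intro i
      rw [Finset.sum_sub_distrib, Finset.sum_const, nsmul_eq_mul, hcard i]
      have : ∑ j ∈ univ.erase i, ⟪u i, v j⟫ = (∑ j, ⟪u i, v j⟫) - ⟪u i, v i⟫ := by
        rw [← Finset.sum_erase_add univ _ (mem_univ i)]; ring
      rw [this, inner_sum]
      ring
    rw [Finset.sum_congr rfl (fun i _ => this i), hSdef, Finset.sum_sub_distrib,
      sum_inner, ← Finset.mul_sum]
  have hsumB : ∑ i, (∑ j ∈ univ.erase i, (⟪u j, v i⟫ - ⟪u i, v i⟫)) = S := by
    have : ∀ i : Fin n, ∑ j ∈ univ.erase i, (⟪u j, v i⟫ - ⟪u i, v i⟫)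
        = ⟪∑ j, u j, v i⟫ - N * ⟪u i, v i⟫ := by
      intro i
      rw [Finset.sum_sub_distrib, Finset.sum_const, nsmul_eq_mul, hcard i]
      have : ∑ j ∈ univ.erase i, ⟪u j, v i⟫ = (∑ j, ⟪u j, v i⟫) - ⟪u i, v i⟫ := by
        rw [← Finset.sum_erase_add univ _ (mem_univ i)]; ring
      rw [this, sum_inner]
      ring
    rw [Finset.sum_congr rfl (fun i _ => this i), hSdef, Finset.sum_sub_distrib,
      ← inner_sum, ← Finset.mul_sum]
  have hdenom : (0:ℝ) < (N-1)*t := by positivity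
  have hps : ∑ i, p i = S / ((N-1)*t) := by
    simp only [hp, ← Finset.sum_div]
    rw [hsumA]
  have hqs : ∑ i, q i = S / ((N-1)*t) := by
    simp only [hq, ← Finset.sum_div]
    rw [hsumB]
  have hmid : -N/((N-1)*t) ≤ (1/2)*((∑ i, p i)/N) + (1/2)*((∑ i, q i)/N) := by
    rw [hps, hqs]
    have hEq : (1/2)*(S/((N-1)*t)/N) + (1/2)*(S/((N-1)*t)/N) = S/(N*((N-1)*t)) := by
      field_simp
      ring
    rw [hEq]
    have hEq2 : -N/((N-1)*t) = (-(N^2))/(N*((N-1)*t)) := by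
      field_simp
    rw [hEq2]
    apply div_le_div_of_nonneg_right ?_ (by positivity) |>.trans_eq rfl
    · exact hS
  have htwo := hgconv.2 (Set.mem_univ ((∑ i, p i)/N)) (Set.mem_univ ((∑ i, q i)/N))
    (by norm_num : (0:ℝ) ≤ 1/2) (by norm_num : (0:ℝ) ≤ 1/2) (by norm_num)
  simp only [smul_eq_mul] at htwo
  have hj1 := jensen p
  have hj2 := jensen q
  have hsum1 : ∑ i, g (p i) ≤ ∑ i, Real.log (1 + ∑ j ∈ univ.erase i,
      Real.exp ((⟪u i, v j⟫ - ⟪u i, v i⟫) / t)) :=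
    Finset.sum_le_sum fun i _ => hstep1 i
  have hsum2 : ∑ i, g (q i) ≤ ∑ i, Real.log (1 + ∑ j ∈ univ.erase i,
      Real.exp ((⟪u j, v i⟫ - ⟪u i, v i⟫) / t)) :=
    Finset.sum_le_sum fun i _ => hstep2 i
  have h2Npos : (0:ℝ) < 2 * N := by positivity
  calc Real.log (1 + (N - 1) * Real.exp (-N / ((N - 1) * t)))
      = g (-N/((N-1)*t)) := rfl
    _ ≤ g ((1/2)*((∑ i, p i)/N) + (1/2)*((∑ i, q i)/N)) := aux_mono hc.le hmid
    _ ≤ (1/2) * g ((∑ i, p i)/N) + (1/2) * g ((∑ i, q i)/N) := htwo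
    _ ≤ (1/2) * ((∑ i, g (p i))/N) + (1/2) * ((∑ i, g (q i))/N) := by
        gcongr
    _ = (1/(2*N)) * (∑ i, g (p i)) + (1/(2*N)) * (∑ i, g (q i)) := by
        field_simp
    _ ≤ (1 / (2 * N)) *
          ∑ i, Real.log (1 + ∑ j ∈ univ.erase i,
            Real.exp ((⟪u i, v j⟫ - ⟪u i, v i⟫) / t))
        + (1 / (2 * N)) *
          ∑ i, Real.log (1 + ∑ j ∈ univ.erase i,
            Real.exp ((⟪u j, v i⟫ - ⟪u i, v i⟫) / t)) := by
        have hw : (0:ℝ) ≤ 1/(2*N) := by positivity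
        exact add_le_add (mul_le_mul_of_nonneg_left hsum1 hw)
          (mul_le_mul_of_nonneg_left hsum2 hw)
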